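/- Consider a bidirected network graph G on n cells and an admissible map f : ℝⁿ → ℝⁿ with additive structure, f_c(x) = ∑_{d≠c} φ_{cd}(x_c, x_d), where each φ_{cd} is C¹. If f is a Laplacian map, then each coupling function depends only on the difference of its arguments and is odd: f_c(x) = k_c + ∑_{d ∈ I(c)} φ_{cd}(x_d − x_c) with φ_{cd}(−t) = −φ_{cd}(t) for all t, and φ_{cd} = φ_{dc}. -/

import Mathlib

open scoped BigOperators

/-- A C¹ map whose Jacobian at every point is a symmetric matrix each of whose rows sums
to zero (i.e. is a Laplacian matrix). -/
def IsLaplacianMap {n : ℕ} (f : (Fin n → ℝ) → Fin n → ℝ) : Prop :=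
  ContDiff ℝ 1 f ∧
    ∀ x : Fin n → ℝ,
      (∀ i j : Fin n,
        fderiv ℝ (fun y => f y i) x (Pi.single j 1) =
          fderiv ℝ (fun y => f y j) x (Pi.single i 1)) ∧
      (∀ i : Fin n, ∑ j : Fin n, fderiv ℝ (fun y => f y i) x (Pi.single j 1) = 0)

noncomputable section

namespace Stmt10Aux

variable {Φ : ℝ × ℝ → ℝ}

lemma hasDerivAt_diag (hΦ : ContDiff ℝ 1 Φ) (k t : ℝ) :
    HasDerivAt (fun s : ℝ => Φ (s, s + k)) (fderiv ℝ Φ (t, t + k) (1, 1)) t := by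
  have h1 : HasDerivAt (fun s : ℝ => ((s, s + k) : ℝ × ℝ)) ((1 : ℝ), (1 : ℝ)) t :=
    (hasDerivAt_id t).prodMk ((hasDerivAt_id t).add_const k)
  have h2 : HasFDerivAt Φ (fderiv ℝ Φ (t, t + k)) (t, t + k) :=
    (hΦ.differentiable one_ne_zero (t, t + k)).hasFDerivAt
  simpa [Function.comp_def] using h2.comp_hasDerivAt t h1

lemma hasDerivAt_snd (hΦ : ContDiff ℝ 1 Φ) (a b : ℝ) :
    HasDerivAt (fun s : ℝ => Φ (a, s)) (fderiv ℝ Φ (a, b) (0, 1)) b := by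
  have h1 : HasDerivAt (fun s : ℝ => ((a, s) : ℝ × ℝ)) ((0 : ℝ), (1 : ℝ)) b :=
    (hasDerivAt_const b a).prodMk (hasDerivAt_id b)
  have h2 : HasFDerivAt Φ (fderiv ℝ Φ (a, b)) (a, b) :=
    (hΦ.differentiable one_ne_zero (a, b)).hasFDerivAt
  simpa [Function.comp_def] using h2.comp_hasDerivAt b h1

lemma lam_continuous (hΦ : ContDiff ℝ 1 Φ) (lam : ℝ → ℝ)
    (hlam : ∀ a b : ℝ, fderiv ℝ Φ (a, b) (1, 1) = lam a) : Continuous lam := by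
  have h1 : Continuous (fun a : ℝ => fderiv ℝ Φ (a, 0) ((1 : ℝ), (1 : ℝ))) := by
    have hc : Continuous (fun a : ℝ => fderiv ℝ Φ (a, 0)) :=
      (hΦ.continuous_fderiv one_ne_zero).comp (continuous_id.prodMk continuous_const)
    exact hc.clm_apply continuous_const
  have : lam = fun a : ℝ => fderiv ℝ Φ (a, 0) ((1 : ℝ), (1 : ℝ)) :=
    funext fun a => (hlam a 0).symm
  rw [this]; exact h1

lemma decomp (hΦ : ContDiff ℝ 1 Φ) (lam : ℝ → ℝ)
    (hlam : ∀ a b : ℝ, fderiv ℝ Φ (a, b) (1, 1) = lam a) (a b : ℝ) :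
    Φ (a, b) = (∫ t in (0 : ℝ)..a, lam t) + Φ (0, b - a) := by
  have hlamc : Continuous lam := lam_continuous hΦ lam hlam
  have hud : ∀ t : ℝ,
      HasDerivAt (fun t : ℝ => Φ (t, t + (b - a)) - ∫ s in (0 : ℝ)..t, lam s) 0 t := by
    intro t
    have h1 := hasDerivAt_diag hΦ (b - a) t
    have h2 : HasDerivAt (fun r : ℝ => ∫ s in (0 : ℝ)..r, lam s) (lam t) t :=
      (hlamc.integral_hasStrictDerivAt 0 t).hasDerivAt
    have h3 := h1.fun_sub h2
    rw [hlam t (t + (b - a))] at h3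
    simpa using h3
  have hconst :
      (fun t : ℝ => Φ (t, t + (b - a)) - ∫ s in (0 : ℝ)..t, lam s) a =
      (fun t : ℝ => Φ (t, t + (b - a)) - ∫ s in (0 : ℝ)..t, lam s) 0 :=
    is_const_of_deriv_eq_zero (fun t => (hud t).differentiableAt)
      (fun t => (hud t).deriv) a 0
  simp only at hconst
  rw [intervalIntegral.integral_same] at hconst
  have e1 : a + (b - a) = b := by ring
  have e2 : (0 : ℝ) + (b - a) = b - a := by ring
  rw [e1, e2] at hconst
  linarith

lemma fderiv_snd_shift (hΦ : ContDiff ℝ 1 Φ) (lam : ℝ → ℝ)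
    (hlam : ∀ a b : ℝ, fderiv ℝ Φ (a, b) (1, 1) = lam a) (a b : ℝ) :
    fderiv ℝ Φ (a, b) (0, 1) = fderiv ℝ Φ (0, b - a) (0, 1) := by
  have h1 := hasDerivAt_snd hΦ a b
  have h2 : HasDerivAt (fun s : ℝ => (∫ t in (0 : ℝ)..a, lam t) + Φ (0, s - a))
      (fderiv ℝ Φ (0, b - a) (0, 1)) b := by
    have hin : HasDerivAt (fun s : ℝ => (((0 : ℝ), s - a) : ℝ × ℝ)) ((0 : ℝ), (1 : ℝ)) b :=
      (hasDerivAt_const b (0 : ℝ)).prodMk ((hasDerivAt_id b).sub_const a)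
    have hF : HasFDerivAt Φ (fderiv ℝ Φ (0, b - a)) (0, b - a) :=
      (hΦ.differentiable one_ne_zero (0, b - a)).hasFDerivAt
    have h3 := hF.comp_hasDerivAt b hin
    simpa [Function.comp] using (h3.const_add (∫ t in (0 : ℝ)..a, lam t))
  have heq : (fun s : ℝ => Φ (a, s)) =
      fun s : ℝ => (∫ t in (0 : ℝ)..a, lam t) + Φ (0, s - a) :=
    funext fun s => decomp hΦ lam hlam a s
  rw [heq] at h1
  exact h1.unique h2

lemma odd_prop (hΦ : ContDiff ℝ 1 Φ) (lam : ℝ → ℝ)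
    (hlam : ∀ a b : ℝ, fderiv ℝ Φ (a, b) (1, 1) = lam a)
    (hsym : ∀ a b : ℝ, fderiv ℝ Φ (a, b) (0, 1) = fderiv ℝ Φ (b, a) (0, 1)) (t : ℝ) :
    Φ (0, -t) - Φ (0, 0) = -(Φ (0, t) - Φ (0, 0)) := by
  have hw : ∀ s : ℝ, HasDerivAt (fun s : ℝ => Φ (0, s) + Φ (0, -s)) 0 s := by
    intro s
    have h1 := hasDerivAt_snd hΦ 0 s
    have h2 : HasDerivAt (fun s : ℝ => Φ (0, -s)) (-(fderiv ℝ Φ (0, -s) (0, 1))) s := by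
      have h3 := (hasDerivAt_snd hΦ 0 (-s)).comp s (hasDerivAt_neg s)
      simpa [Function.comp_def, mul_comm] using h3
    have h4 := h1.fun_add h2
    have h5 : fderiv ℝ Φ (0, s) (0, 1) = fderiv ℝ Φ (0, -s) (0, 1) := by
      rw [hsym 0 s]
      have := fderiv_snd_shift hΦ lam hlam s 0
      rw [this]; norm_num
    rw [h5] at h4
    simpa using h4
  have hconst : (fun s : ℝ => Φ (0, s) + Φ (0, -s)) t =
      (fun s : ℝ => Φ (0, s) + Φ (0, -s)) 0 :=
    is_const_of_deriv_eq_zero (fun s => (hw s).differentiableAt)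
      (fun s => (hw s).deriv) t 0
  simp only [neg_zero] at hconst
  linarith

end Stmt10Aux

end

/-- For a bidirected network with additive structure
`f_c(x) = ∑_{d ≠ c} φ_{cd}(x_c, x_d)`, if `f` is a Laplacian map then each coupling
depends only on the difference of its arguments and is odd:
`f_c(x) = k_c + ∑_{d ≠ c} ψ_{cd}(x_d - x_c)` with `ψ_{cd}` odd and `ψ_{cd} = ψ_{dc}`. -/
theorem stmt_10 (n : ℕ) (φ : Fin n → Fin n → ℝ → ℝ → ℝ)
    (hφC1 : ∀ c d : Fin n, ContDiff ℝ 1 (fun p : ℝ × ℝ => φ c d p.1 p.2))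
    (hbid : ∀ c d : Fin n, φ c d = φ d c)
    (f : (Fin n → ℝ) → Fin n → ℝ)
    (hf : ∀ (x : Fin n → ℝ) (c : Fin n),
      f x c = ∑ d ∈ Finset.univ.filter (fun d => d ≠ c), φ c d (x c) (x d))
    (hLap : IsLaplacianMap f) :
    ∃ (k : Fin n → ℝ) (ψ : Fin n → Fin n → ℝ → ℝ),
      (∀ (c d : Fin n) (t : ℝ), ψ c d (-t) = -ψ c d t) ∧
      (∀ c d : Fin n, ψ c d = ψ d c) ∧
      (∀ (x : Fin n → ℝ) (c : Fin n),
        f x c = k c + ∑ d ∈ Finset.univ.filter (fun d => d ≠ c), ψ c d (x d - x c)) := by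
  classical
  -- Notation
  set D : Fin n → Fin n → ℝ × ℝ → (ℝ × ℝ →L[ℝ] ℝ) :=
    fun c d p => fderiv ℝ (fun p : ℝ × ℝ => φ c d p.1 p.2) p with hD
  -- Step A: formula for the directional derivatives of f
  have hfder : ∀ (x : Fin n → ℝ) (c : Fin n) (v : Fin n → ℝ),
      fderiv ℝ (fun y => f y c) x v =
        ∑ d ∈ Finset.univ.filter (fun d => d ≠ c), D c d (x c, x d) (v c, v d) := by
    intro x c v
    have hterm : ∀ d : Fin n,
        HasFDerivAt (fun y : Fin n → ℝ => φ c d (y c) (y d))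
          ((D c d (x c, x d)).comp
            ((ContinuousLinearMap.proj (R := ℝ) (φ := fun _ : Fin n => ℝ) c).prod
              (ContinuousLinearMap.proj d))) x := by
      intro d
      have hL : HasFDerivAt (fun y : Fin n → ℝ => ((y c, y d) : ℝ × ℝ))
          ((ContinuousLinearMap.proj (R := ℝ) (φ := fun _ : Fin n => ℝ) c).prod
            (ContinuousLinearMap.proj d)) x :=
        ((ContinuousLinearMap.proj (R := ℝ) (φ := fun _ : Fin n => ℝ) c).prod
          (ContinuousLinearMap.proj d)).hasFDerivAt
      have hΦ : HasFDerivAt (fun p : ℝ × ℝ => φ c d p.1 p.2) (D c d (x c, x d)) (x c, x d) :=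
        ((hφC1 c d).differentiable one_ne_zero (x c, x d)).hasFDerivAt
      exact hΦ.comp x hL
    have hsum : HasFDerivAt (fun y => f y c)
        (∑ d ∈ Finset.univ.filter (fun d => d ≠ c),
          (D c d (x c, x d)).comp
            ((ContinuousLinearMap.proj (R := ℝ) (φ := fun _ : Fin n => ℝ) c).prod
              (ContinuousLinearMap.proj d))) x := by
      have h := HasFDerivAt.fun_sum (fun d (_ : d ∈ Finset.univ.filter (fun d => d ≠ c)) => hterm d)
      have hfe : (fun y => f y c) =
          fun y => ∑ d ∈ Finset.univ.filter (fun d => d ≠ c), φ c d (y c) (y d) :=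
        funext fun y => hf y c
      rw [hfe]; exact h
    rw [hsum.fderiv]
    simp [ContinuousLinearMap.sum_apply]
  -- Step B: row sums
  have hrow : ∀ (x : Fin n → ℝ) (c : Fin n),
      ∑ d ∈ Finset.univ.filter (fun d => d ≠ c), D c d (x c, x d) (1, 1) = 0 := by
    intro x c
    have h0 := (hLap.2 x).2 c
    have h1 : ∀ j : Fin n, fderiv ℝ (fun y => f y c) x (Pi.single j 1) =
        ∑ d ∈ Finset.univ.filter (fun d => d ≠ c),
          D c d (x c, x d) ((Pi.single j 1 : Fin n → ℝ) c, (Pi.single j 1 : Fin n → ℝ) d) :=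
      fun j => hfder x c _
    rw [Finset.sum_congr rfl (fun j _ => h1 j), Finset.sum_comm] at h0
    have h2 : ∀ d : Fin n,
        ∑ j : Fin n, D c d (x c, x d)
            ((Pi.single j 1 : Fin n → ℝ) c, (Pi.single j 1 : Fin n → ℝ) d) =
          D c d (x c, x d) (1, 1) := by
      intro d
      rw [← map_sum]
      congr 1
      rw [Prod.ext_iff]
      constructor <;> simp [Prod.fst_sum, Prod.snd_sum, Pi.single_apply]
    rw [Finset.sum_congr rfl (fun d _ => h2 d)] at h0
    exact h0
  -- Step C: symmetry of second partials
  have hsym : ∀ c d : Fin n, d ≠ c → ∀ a b : ℝ,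
      D c d (a, b) (0, 1) = D c d (b, a) (0, 1) := by
    intro c d hdc a b
    set x : Fin n → ℝ := Function.update (Function.update (fun _ => (0 : ℝ)) c a) d b with hx
    have hxc : x c = a := by
      rw [hx, Function.update_of_ne (Ne.symm hdc), Function.update_self]
    have hxd : x d = b := by rw [hx, Function.update_self]
    have h := (hLap.2 x).1 c d
    rw [hfder x c (Pi.single d 1), hfder x d (Pi.single c 1)] at h
    have hmemd : d ∈ Finset.univ.filter (fun e => e ≠ c) :=
      Finset.mem_filter.2 ⟨Finset.mem_univ d, hdc⟩
    have hmemc : c ∈ Finset.univ.filter (fun e => e ≠ d) :=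
      Finset.mem_filter.2 ⟨Finset.mem_univ c, Ne.symm hdc⟩
    have hL : ∑ e ∈ Finset.univ.filter (fun e => e ≠ c),
        D c e (x c, x e) ((Pi.single d 1 : Fin n → ℝ) c, (Pi.single d 1 : Fin n → ℝ) e) =
        D c d (a, b) (0, 1) := by
      rw [Finset.sum_eq_single_of_mem d hmemd (fun e _ hed => by
        have h1 : (Pi.single d 1 : Fin n → ℝ) c = 0 := Pi.single_eq_of_ne (Ne.symm hdc) 1
        have h2 : (Pi.single d 1 : Fin n → ℝ) e = 0 := Pi.single_eq_of_ne hed 1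
        rw [h1, h2]
        exact (D c e (x c, x e)).map_zero)]
      rw [hxc, hxd, Pi.single_eq_of_ne (Ne.symm hdc) 1, Pi.single_eq_same]
    have hR : ∑ e ∈ Finset.univ.filter (fun e => e ≠ d),
        D d e (x d, x e) ((Pi.single c 1 : Fin n → ℝ) d, (Pi.single c 1 : Fin n → ℝ) e) =
        D d c (b, a) (0, 1) := by
      rw [Finset.sum_eq_single_of_mem c hmemc (fun e _ hec => by
        have h1 : (Pi.single c 1 : Fin n → ℝ) d = 0 := Pi.single_eq_of_ne hdc 1
        have h2 : (Pi.single c 1 : Fin n → ℝ) e = 0 := Pi.single_eq_of_ne hec 1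
        rw [h1, h2]
        exact (D d e (x d, x e)).map_zero)]
      rw [hxc, hxd, Pi.single_eq_of_ne hdc 1, Pi.single_eq_same]
    rw [hL, hR] at h
    have hE : D d c = D c d := by
      simp only [hD]
      rw [hbid c d]
    rw [hE] at h
    exact h
  -- Step D: the (1,1)-derivative depends only on the first variable
  have hconst : ∀ c d : Fin n, d ≠ c → ∀ a b : ℝ,
      D c d (a, b) (1, 1) = D c d (a, 0) (1, 1) := by
    intro c d hdc a b
    set x0 : Fin n → ℝ := Function.update (fun _ => (0 : ℝ)) c a with hx0
    set x1 : Fin n → ℝ := Function.update x0 d b with hx1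
    have hx0c : x0 c = a := by rw [hx0, Function.update_self]
    have hx1c : x1 c = a := by
      rw [hx1, Function.update_of_ne (Ne.symm hdc)]; exact hx0c
    have hmem : d ∈ Finset.univ.filter (fun d => d ≠ c) :=
      Finset.mem_filter.2 ⟨Finset.mem_univ d, hdc⟩
    have e1 := hrow x1 c
    have e2 := hrow x0 c
    rw [← Finset.sum_erase_add _ _ hmem] at e1 e2
    have hrest : ∑ e ∈ (Finset.univ.filter (fun d => d ≠ c)).erase d,
          D c e (x1 c, x1 e) (1, 1) =
        ∑ e ∈ (Finset.univ.filter (fun d => d ≠ c)).erase d,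
          D c e (x0 c, x0 e) (1, 1) := by
      apply Finset.sum_congr rfl
      intro e he
      have hed : e ≠ d := (Finset.mem_erase.1 he).1
      have hec : e ≠ c := (Finset.mem_filter.1 (Finset.mem_erase.1 he).2).2
      have hx0e : x0 e = 0 := by rw [hx0, Function.update_of_ne hec]
      have hx1e : x1 e = 0 := by
        rw [hx1, Function.update_of_ne hed]; exact hx0e
      rw [hx1c, hx0c, hx1e, hx0e]
    have hx1d : x1 d = b := by rw [hx1, Function.update_self]
    have hx0d : x0 d = 0 := by rw [hx0, Function.update_of_ne hdc]
    rw [hx1c, hx1d] at e1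
    rw [hx0c, hx0d] at e2
    rw [hx1c] at hrest
    rw [hx0c] at hrest
    linarith [e1, e2, hrest]
  -- lam and its sum
  set lam : Fin n → Fin n → ℝ → ℝ := fun c d a => D c d (a, 0) (1, 1) with hlamdef
  have hlam : ∀ c d : Fin n, d ≠ c → ∀ a b : ℝ, D c d (a, b) (1, 1) = lam c d a :=
    fun c d hdc a b => hconst c d hdc a b
  have hlamsum : ∀ (c : Fin n) (a : ℝ),
      ∑ d ∈ Finset.univ.filter (fun d => d ≠ c), lam c d a = 0 := by
    intro c a
    have h := hrow (Function.update (fun _ => (0 : ℝ)) c a) c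
    rw [Function.update_self] at h
    rw [← h]
    apply Finset.sum_congr rfl
    intro d hd
    have hdc : d ≠ c := (Finset.mem_filter.1 hd).2
    rw [Function.update_of_ne hdc]
  -- per-pair decomposition
  have hdecomp : ∀ c d : Fin n, d ≠ c → ∀ a b : ℝ,
      φ c d a b = (∫ t in (0 : ℝ)..a, lam c d t) + φ c d 0 (b - a) :=
    fun c d hdc a b => Stmt10Aux.decomp (hφC1 c d) (lam c d) (hlam c d hdc) a b
  -- oddness
  have hodd : ∀ c d : Fin n, d ≠ c → ∀ t : ℝ,
      φ c d 0 (-t) - φ c d 0 0 = -(φ c d 0 t - φ c d 0 0) :=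
    fun c d hdc t =>
      Stmt10Aux.odd_prop (hφC1 c d) (lam c d) (hlam c d hdc) (hsym c d hdc) t
  -- define ψ and k
  refine ⟨fun c => ∑ d ∈ Finset.univ.filter (fun d => d ≠ c), φ c d 0 0,
    fun c d t => if c = d then 0 else φ c d 0 t - φ c d 0 0, ?_, ?_, ?_⟩
  · intro c d t
    by_cases h : c = d
    · simp [h]
    · simp only [if_neg h]
      exact hodd c d (fun hh => h hh.symm) t
  · intro c d
    funext t
    by_cases h : c = d
    · simp [h]
    · simp only [if_neg h, if_neg (Ne.symm h)]
      rw [hbid c d]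
  · intro x c
    rw [hf x c]
    have hterm : ∀ d ∈ Finset.univ.filter (fun d => d ≠ c),
        φ c d (x c) (x d) =
          (∫ t in (0 : ℝ)..(x c), lam c d t) +
            (φ c d 0 0 + (if c = d then 0 else φ c d 0 (x d - x c) - φ c d 0 0)) := by
      intro d hd
      have hdc : d ≠ c := (Finset.mem_filter.1 hd).2
      rw [hdecomp c d hdc (x c) (x d), if_neg (fun hh => hdc hh.symm)]
      ring
    rw [Finset.sum_congr rfl hterm, Finset.sum_add_distrib, Finset.sum_add_distrib]
    have hint : ∑ d ∈ Finset.univ.filter (fun d => d ≠ c),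
        ∫ t in (0 : ℝ)..(x c), lam c d t = 0 := by
      rw [← intervalIntegral.integral_finset_sum]
      · rw [intervalIntegral.integral_congr (g := fun _ => (0 : ℝ))]
        · simp
        · intro t _
          exact hlamsum c t
      · intro d hd
        have hdc : d ≠ c := (Finset.mem_filter.1 hd).2
        exact (Stmt10Aux.lam_continuous (hφC1 c d) (lam c d) (hlam c d hdc)).intervalIntegrable _ _
    rw [hint]
    ring
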